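/- Assume g_i ≥ 1 for all i ∈ ℤ/γℤ. Let ℓ ≥ 1 and let integers satisfy 1 = k_1 < j_1 < k_2 < j_2 < ⋯ < k_ℓ < j_ℓ ≤ γ, and set k_{ℓ+1} := γ + 1. Define the multidegree d on C by d_i = g_i − 1 if i ≡ k_r (mod γ) for some r, d_i = g_i + 1 if i ≡ j_r (mod γ) for some r, and d_i = g_i otherwise. Then d is effective (d_i ≥ 0 for all i), and the number of admissible subsets Z ⊆ ℤ/γℤ equals 1 + Σ_{1 ≤ r, s ≤ ℓ} (j_r − k_r)(k_{s+1} − j_s). (Proposition 4.3 of the paper: this number is the number of irreducible components of the Brill–Noether locus W_d(C).) -/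

import Mathlib

open Finset

/-- The number of connected components of the subcurve of a circular curve indexed by `S`:
the number of `i ∈ S` with `i − 1 ∉ S`. -/
def nCirc {γ : ℕ} (S : Finset (ZMod γ)) : ℕ :=
  (S.filter (fun i => i - 1 ∉ S)).card

/-- The multidegree `e` on the subcurve `Z` obtained from `d` by subtracting the points of
intersection of `Z` with its complement: `e i = d i − [i−1 ∉ Z] − [i+1 ∉ Z]`. -/
def eMult {γ : ℕ} (d : ZMod γ → ℤ) (Z : Finset (ZMod γ)) (i : ZMod γ) : ℤ :=
  d i - (if i - 1 ∈ Z then 0 else 1) - (if i + 1 ∈ Z then 0 else 1)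

/-- The genus of the subcurve of the circular curve indexed by `Z`: it is `Σ_{i∈Z} g i`
for proper `Z`, and the total genus `1 + Σ_i g i` for `Z = ℤ/γℤ`. -/
def gSub {γ : ℕ} [NeZero γ] (g : ZMod γ → ℕ) (Z : Finset (ZMod γ)) : ℤ :=
  if Z = Finset.univ then 1 + ∑ i, (g i : ℤ) else ∑ i ∈ Z, (g i : ℤ)

/-- `Z` is admissible for the multidegree `d` if `Z` is nonempty and connected, and the
multidegree `e = eMult d Z` is effective on `Z`, of total degree `g_Z − 1` on `Z`, and
semistable on `Z`. -/
def Admissible {γ : ℕ} [NeZero γ] (g : ZMod γ → ℕ) (d : ZMod γ → ℤ)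
    (Z : Finset (ZMod γ)) : Prop :=
  Z.Nonempty ∧ (Z = Finset.univ ∨ nCirc Z = 1) ∧
    (∀ i ∈ Z, 0 ≤ eMult d Z i) ∧
    (∑ i ∈ Z, eMult d Z i = gSub g Z - 1) ∧
    ∀ Y : Finset (ZMod γ), Y ⊆ Z → Y.Nonempty → Y ≠ Z →
      (∑ i ∈ Y, eMult d Z i) ≥ (∑ i ∈ Y, (g i : ℤ)) - nCirc Y

lemma val_sub_one {γ : ℕ} [NeZero γ] (c : ZMod γ) (hc : c ≠ 0) : (c - 1).val = c.val - 1 := by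
  have h1 : 1 ≤ c.val := Nat.one_le_iff_ne_zero.2 (fun h => hc ((ZMod.val_eq_zero c).1 h))
  have hv := ZMod.val_lt c
  have hrw : c - 1 = ((c.val - 1 : ℕ) : ZMod γ) := by
    push_cast [Nat.cast_sub h1]
    rw [ZMod.natCast_rightInverse c]
  rw [hrw, ZMod.val_cast_of_lt (by omega)]

lemma val_zero_sub_one {γ : ℕ} [NeZero γ] : ((0 : ZMod γ) - 1).val = γ - 1 := by
  have hγ : 1 ≤ γ := Nat.one_le_iff_ne_zero.2 (NeZero.ne γ)
  have : ((0 : ZMod γ) - 1) = ((γ - 1 : ℕ) : ZMod γ) := by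
    push_cast [Nat.cast_sub hγ]
    simp
  rw [this, ZMod.val_cast_of_lt (by omega)]

lemma val_add_one {γ : ℕ} [NeZero γ] (c : ZMod γ) (h : c.val + 1 < γ) : (c + 1).val = c.val + 1 := by
  have hrw : c + 1 = ((c.val + 1 : ℕ) : ZMod γ) := by
    push_cast
    rw [ZMod.natCast_rightInverse c]
  rw [hrw, ZMod.val_cast_of_lt h]

def arcZ {γ : ℕ} [NeZero γ] (a b : ZMod γ) : Finset (ZMod γ) :=
  univ.filter (fun x => (x - a).val ≤ (b - a).val)

section arc
variable {γ : ℕ} [NeZero γ] (a b : ZMod γ)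

lemma mem_arcZ {x : ZMod γ} : x ∈ arcZ a b ↔ (x - a).val ≤ (b - a).val := by
  simp [arcZ]

lemma left_mem_arcZ : a ∈ arcZ a b := by simp [mem_arcZ]

lemma right_mem_arcZ : b ∈ arcZ a b := by simp [mem_arcZ]

lemma eq_iff_val_eq {x : ZMod γ} : x = b ↔ (x - a).val = (b - a).val := by
  constructor
  · rintro rfl; rfl
  · intro h
    have := ZMod.val_injective γ h
    have : x - a = b - a := by
      exact ZMod.val_injective γ h
    linear_combination this

variable {a b}
variable (hp : (b - a).val < γ - 1)

include hp

lemma sub_one_mem_arcZ {x : ZMod γ} (hx : x ∈ arcZ a b) : x - 1 ∈ arcZ a b ↔ x ≠ a := by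
  rw [mem_arcZ] at hx ⊢
  have hxa : x - 1 - a = x - a - 1 := by ring
  constructor
  · intro h hxa'
    subst hxa'
    rw [hxa] at h
    simp only [sub_self] at h
    rw [val_zero_sub_one] at h
    omega
  · intro h
    have hne : x - a ≠ 0 := fun hc => h (by linear_combination hc)
    rw [hxa, val_sub_one _ hne]
    omega

lemma add_one_mem_arcZ {x : ZMod γ} (hx : x ∈ arcZ a b) : x + 1 ∈ arcZ a b ↔ x ≠ b := by
  rw [mem_arcZ] at hx ⊢
  have hxa : x + 1 - a = x - a + 1 := by ring
  have hγ := ZMod.val_lt (b - a)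
  rw [hxa, val_add_one _ (by omega)]
  rw [Ne, eq_iff_val_eq a b]
  omega

lemma arc_sub_one_left : a - 1 ∉ arcZ a b := by
  rw [mem_arcZ]
  have : a - 1 - a = (0 : ZMod γ) - 1 := by ring
  rw [this, val_zero_sub_one]
  omega

lemma arc_left_filter : (arcZ a b).filter (fun i => i - 1 ∉ arcZ a b) = {a} := by
  ext x
  simp only [mem_filter, mem_singleton]
  constructor
  · rintro ⟨hx, hx1⟩
    by_contra h
    exact hx1 ((sub_one_mem_arcZ hp hx).2 h)
  · rintro rfl
    refine ⟨left_mem_arcZ _ _, ?_⟩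
    exact arc_sub_one_left hp

lemma arc_ncirc : nCirc (arcZ a b) = 1 := by
  rw [nCirc, arc_left_filter hp, card_singleton]

lemma arc_sdiff_shift :
    arcZ a b \ (arcZ a b).image (fun x => x - 1) = {b} := by
  ext x
  simp only [mem_sdiff, mem_image, mem_singleton]
  have himg : (∃ y ∈ arcZ a b, y - 1 = x) ↔ x + 1 ∈ arcZ a b := by
    constructor
    · rintro ⟨y, hy, rfl⟩; simpa using hy
    · intro h; exact ⟨x + 1, h, by ring⟩
  rw [himg]
  constructor
  · rintro ⟨hx, hx1⟩
    by_contra h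
    exact hx1 ((add_one_mem_arcZ hp hx).2 h)
  · rintro rfl
    refine ⟨right_mem_arcZ _ _, ?_⟩
    intro h
    exact absurd rfl ((add_one_mem_arcZ hp (right_mem_arcZ _ _)).1 h)

lemma shift_sdiff_arc :
    (arcZ a b).image (fun x => x - 1) \ arcZ a b = {a - 1} := by
  ext x
  simp only [mem_sdiff, mem_image, mem_singleton]
  have himg : (∃ y ∈ arcZ a b, y - 1 = x) ↔ x + 1 ∈ arcZ a b := by
    constructor
    · rintro ⟨y, hy, rfl⟩; simpa using hy
    · intro h; exact ⟨x + 1, h, by ring⟩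
  rw [himg]
  constructor
  · rintro ⟨hx1, hx⟩
    have : x + 1 = a := by
      by_contra h
      have := (sub_one_mem_arcZ hp hx1).2 (by
        intro hc
        exact h (by linear_combination hc))
      simp only [add_sub_cancel_right] at this
      exact hx this
    linear_combination this
  · rintro rfl
    constructor
    · simpa using left_mem_arcZ _ _ (γ := γ)
    · exact arc_sub_one_left hp

end arc

section tele
variable {γ : ℕ} [NeZero γ]
set_option linter.unusedSectionVars false

lemma shift_inj : Function.Injective (fun x : ZMod γ => x - 1) :=
  fun x y h => by simpa using sub_left_injective h

lemma mem_shift {Y : Finset (ZMod γ)} {x : ZMod γ} :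
    x ∈ Y.image (fun y => y - 1) ↔ x + 1 ∈ Y := by
  simp only [mem_image]
  constructor
  · rintro ⟨y, hy, rfl⟩; simpa using hy
  · intro h; exact ⟨x + 1, h, by ring⟩

variable (F : ZMod γ → ℤ)

lemma tele_core (Y : Finset (ZMod γ)) :
    ∑ i ∈ Y, (F i - F (i - 1)) =
      ∑ i ∈ Y \ Y.image (fun x => x - 1), F i
        - ∑ i ∈ Y.image (fun x => x - 1) \ Y, F i := by
  rw [Finset.sum_sub_distrib]
  have h1 : ∑ i ∈ Y, F (i - 1) = ∑ i ∈ Y.image (fun x => x - 1), F i :=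
    (Finset.sum_image (fun x _ y _ h => shift_inj h)).symm
  rw [h1]
  have h2 := Finset.sum_inter_add_sum_sdiff Y (Y.image (fun x => x - 1)) F
  have h3 := Finset.sum_inter_add_sum_sdiff (Y.image (fun x => x - 1)) Y F
  rw [Finset.inter_comm] at h3
  linarith

lemma card_shift_sdiff (Y : Finset (ZMod γ)) :
    (Y.image (fun x => x - 1) \ Y).card = nCirc Y := by
  rw [nCirc]
  have : (Y.image (fun x => x - 1) \ Y).image (fun x => x + 1)
      = Y.filter (fun i => i - 1 ∉ Y) := by
    ext x
    simp only [mem_image, mem_sdiff, mem_filter, mem_shift]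
    constructor
    · rintro ⟨y, ⟨⟨c, hc, hcy⟩, hy2⟩, rfl⟩
      have : y + 1 = c := by linear_combination -hcy
      rw [this]
      exact ⟨hc, by rwa [hcy]⟩
    · rintro ⟨hx, hx1⟩
      exact ⟨x - 1, ⟨⟨x, hx, rfl⟩, hx1⟩, by ring⟩
  rw [← this]
  exact (Finset.card_image_of_injective _ (fun x y h => by simpa using add_left_injective 1 h)).symm

lemma card_sdiff_shift (Y : Finset (ZMod γ)) :
    (Y \ Y.image (fun x => x - 1)).card = nCirc Y := by
  have h1 : (Y.image (fun x => x - 1)).card = Y.card :=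
    Finset.card_image_of_injective _ shift_inj
  have h2 := Finset.card_sdiff_add_card_inter Y (Y.image (fun x => x - 1))
  have h3 := Finset.card_sdiff_add_card_inter (Y.image (fun x => x - 1)) Y
  rw [Finset.inter_comm] at h3
  rw [← card_shift_sdiff Y]
  omega

lemma sum_ge_neg_card {s : Finset (ZMod γ)} (hF : ∀ x, -1 ≤ F x) :
    -(s.card : ℤ) ≤ ∑ i ∈ s, F i := by
  calc -(s.card : ℤ) = ∑ _i ∈ s, (-1 : ℤ) := by simp
  _ ≤ ∑ i ∈ s, F i := Finset.sum_le_sum (fun i _ => hF i)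

lemma sum_le_zero' {s : Finset (ZMod γ)} (hF : ∀ x, F x ≤ 0) :
    ∑ i ∈ s, F i ≤ 0 :=
  Finset.sum_nonpos (fun i _ => hF i)

lemma master (hF : ∀ x, -1 ≤ F x ∧ F x ≤ 0) (Y : Finset (ZMod γ)) :
    -(nCirc Y : ℤ) ≤ ∑ i ∈ Y, (F i - F (i - 1)) := by
  rw [tele_core]
  have b1 := sum_ge_neg_card F (s := Y \ Y.image (fun x => x - 1)) (fun x => (hF x).1)
  have b2 := sum_le_zero' F (s := Y.image (fun x => x - 1) \ Y) (fun x => (hF x).2)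
  rw [card_sdiff_shift] at b1
  omega

lemma master' (hF : ∀ x, -1 ≤ F x ∧ F x ≤ 0) (Y : Finset (ZMod γ)) (a b : ZMod γ)
    (ha : F (a - 1) = -1) (hb : F b = 0)
    (haY : a ∈ Y → a - 1 ∉ Y) (hbY : b ∈ Y → b + 1 ∉ Y) :
    -(nCirc Y : ℤ) ≤ ∑ i ∈ Y, (F i - F (i - 1))
      - (if a ∈ Y then 1 else 0) - (if b ∈ Y then 1 else 0) := by
  rw [tele_core]
  set S1 := Y \ Y.image (fun x => x - 1) with hS1
  set S2 := Y.image (fun x => x - 1) \ Y with hS2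
  have claim1 : -(S1.card : ℤ) ≤ ∑ i ∈ S1, F i - (if b ∈ Y then 1 else 0) := by
    by_cases hbY' : b ∈ Y
    · have hbS1 : b ∈ S1 := by
        rw [hS1, mem_sdiff, mem_shift]
        exact ⟨hbY', hbY hbY'⟩
      rw [← Finset.sum_erase_add _ _ hbS1]
      have := sum_ge_neg_card F (s := S1.erase b) (fun x => (hF x).1)
      have hc : (S1.erase b).card = S1.card - 1 := Finset.card_erase_of_mem hbS1
      have hc1 : 1 ≤ S1.card := Finset.card_pos.2 ⟨b, hbS1⟩
      simp only [hbY', if_true, hb]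
      have : -((S1.card : ℤ) - 1) ≤ ∑ i ∈ S1.erase b, F i := by
        rw [hc] at this; push_cast [hc1] at this; linarith
      linarith
    · simp only [hbY', if_false]
      have := sum_ge_neg_card F (s := S1) (fun x => (hF x).1)
      linarith
  have claim2 : 0 ≤ -∑ i ∈ S2, F i - (if a ∈ Y then 1 else 0) := by
    by_cases haY' : a ∈ Y
    · have haS2 : a - 1 ∈ S2 := by
        rw [hS2, mem_sdiff, mem_shift]
        exact ⟨by simpa using haY', haY haY'⟩
      rw [← Finset.sum_erase_add _ _ haS2]
      have := sum_le_zero' F (s := S2.erase (a - 1)) (fun x => (hF x).2)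
      simp only [haY', if_true, ha]
      linarith
    · simp only [haY', if_false]
      have := sum_le_zero' F (s := S2) (fun x => (hF x).2)
      linarith
  have hcard : (S1.card : ℤ) = nCirc Y := by rw [hS1, card_sdiff_shift]
  linarith

lemma sum_univ_tele : ∑ i : ZMod γ, (F i - F (i - 1)) = 0 := by
  rw [Finset.sum_sub_distrib]
  have : ∑ i : ZMod γ, F (i - 1) = ∑ i : ZMod γ, F i :=
    Fintype.sum_equiv (Equiv.subRight (1 : ZMod γ)) _ _ (fun i => rfl)
  rw [this]; ring

end tele

section arc2
variable {γ : ℕ} [NeZero γ]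
set_option linter.unusedSectionVars false

lemma arc_eq_univ {a b : ZMod γ} (h : γ - 1 ≤ (b - a).val) : arcZ a b = univ := by
  ext x
  simp only [mem_univ, iff_true, mem_arcZ]
  have := ZMod.val_lt (x - a)
  omega

lemma ncirc_univ : nCirc (univ : Finset (ZMod γ)) = 0 := by
  simp [nCirc]

lemma sum_arc (F : ZMod γ → ℤ) {a b : ZMod γ} (hp : (b - a).val < γ - 1) :
    ∑ i ∈ arcZ a b, (F i - F (i - 1)) = F b - F (a - 1) := by
  rw [tele_core, arc_sdiff_shift hp, shift_sdiff_arc hp, Finset.sum_singleton,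
    Finset.sum_singleton]

lemma exists_arc {Z : Finset (ZMod γ)} (hZ : Z.Nonempty) (h1 : nCirc Z = 1) :
    ∃ a b : ZMod γ, Z = arcZ a b := by
  obtain ⟨a, ha⟩ := Finset.card_eq_one.1 h1
  have haZ : a ∈ Z ∧ a - 1 ∉ Z := by
    have : a ∈ Z.filter (fun i => i - 1 ∉ Z) := ha ▸ Finset.mem_singleton_self a
    simpa using this
  have hstep : ∀ x ∈ Z, x ≠ a → x - 1 ∈ Z := by
    intro x hx hxa
    by_contra h
    have : x ∈ Z.filter (fun i => i - 1 ∉ Z) := Finset.mem_filter.2 ⟨hx, h⟩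
    rw [ha, Finset.mem_singleton] at this
    exact hxa this
  have claim : ∀ n : ℕ, ∀ x ∈ Z, (x - a).val = n → ∀ t ≤ n, a + (t : ZMod γ) ∈ Z := by
    intro n
    induction n with
    | zero =>
      intro x hx hv t ht
      have : x = a := by
        have : x - a = 0 := (ZMod.val_eq_zero _).1 hv
        linear_combination this
      interval_cases t
      simpa using (this ▸ hx)
    | succ n ih =>
      intro x hx hv t ht
      have hxa : x ≠ a := by
        intro h; subst h; simp at hv
      have hne : x - a ≠ 0 := fun hc => hxa (by linear_combination hc)
      have hx1 : x - 1 ∈ Z := hstep x hx hxa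
      have hv1 : (x - 1 - a).val = n := by
        have : x - 1 - a = x - a - 1 := by ring
        rw [this, val_sub_one _ hne, hv]
        omega
      rcases Nat.lt_or_ge t (n + 1) with h | h
      · exact ih (x - 1) hx1 hv1 t (by omega)
      · have ht' : t = n + 1 := by omega
        subst ht'
        have : a + ((n + 1 : ℕ) : ZMod γ) = x := by
          have h2 : ((( x - a).val : ℕ) : ZMod γ) = x - a := ZMod.natCast_rightInverse _
          rw [← hv, h2]; ring
        rwa [this]
  obtain ⟨x₀, hx₀⟩ := hZ
  set L := (Z.image (fun x => (x - a).val)).max' ⟨(x₀ - a).val, Finset.mem_image_of_mem _ hx₀⟩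
    with hL
  obtain ⟨z, hzZ, hzL⟩ := Finset.mem_image.1
    ((Z.image (fun x => (x - a).val)).max'_mem ⟨(x₀ - a).val, Finset.mem_image_of_mem _ hx₀⟩)
  have hLle : ∀ x ∈ Z, (x - a).val ≤ L := by
    intro x hx
    rw [hL]
    exact Finset.le_max' (Z.image (fun y => (y - a).val)) ((x - a).val) (Finset.mem_image_of_mem _ hx)
  have hLγ : L < γ := by rw [hL, ← hzL]; exact ZMod.val_lt _
  refine ⟨a, a + (L : ZMod γ), ?_⟩
  have hba : (a + (L : ZMod γ) - a).val = L := by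
    have : a + (L : ZMod γ) - a = (L : ZMod γ) := by ring
    rw [this, ZMod.val_cast_of_lt hLγ]
  ext x
  rw [mem_arcZ, hba]
  constructor
  · exact fun hx => hLle x hx
  · intro hx
    have := claim L z hzZ hzL (x - a).val hx
    have h2 : a + (((x - a).val : ℕ) : ZMod γ) = x := by
      rw [ZMod.natCast_rightInverse (x - a)]; ring
    rwa [h2] at this

end arc2

def Fn (ℓ : ℕ) (k j : ℕ → ℕ) (m : ℕ) : ℤ :=
  if ∃ t ∈ Finset.Icc 1 ℓ, k t ≤ m ∧ m < j t then -1 else 0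

lemma Fn_bounds (ℓ : ℕ) (k j : ℕ → ℕ) (m : ℕ) : -1 ≤ Fn ℓ k j m ∧ Fn ℓ k j m ≤ 0 := by
  rw [Fn]; split <;> simp

lemma Fn_eq_neg_one_iff (ℓ : ℕ) (k j : ℕ → ℕ) (m : ℕ) :
    Fn ℓ k j m = -1 ↔ ∃ t, (1 ≤ t ∧ t ≤ ℓ) ∧ k t ≤ m ∧ m < j t := by
  rw [Fn]
  constructor
  · intro h
    by_cases hc : ∃ t ∈ Finset.Icc 1 ℓ, k t ≤ m ∧ m < j t
    · obtain ⟨t, ht, h2⟩ := hc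
      exact ⟨t, Finset.mem_Icc.1 ht, h2⟩
    · rw [if_neg hc] at h
      norm_num at h
  · rintro ⟨t, ⟨h1, h2⟩, h3⟩
    rw [if_pos ⟨t, Finset.mem_Icc.2 ⟨h1, h2⟩, h3⟩]

lemma Fn_eq_zero_iff (ℓ : ℕ) (k j : ℕ → ℕ) (m : ℕ) :
    Fn ℓ k j m = 0 ↔ ¬ ∃ t, (1 ≤ t ∧ t ≤ ℓ) ∧ k t ≤ m ∧ m < j t := by
  have h1 := Fn_eq_neg_one_iff ℓ k j m
  have h2 := Fn_bounds ℓ k j m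
  constructor
  · intro h he
    rw [← h1] at he
    omega
  · intro he
    by_contra h
    exact he (h1.1 (by omega))

lemma cast_inj_of_le (γ m n : ℕ) (hγ : 1 ≤ γ) (hm1 : 1 ≤ m) (hm2 : m ≤ γ)
    (hn1 : 1 ≤ n) (hn2 : n ≤ γ) (h : (m : ZMod γ) = n) : m = n := by
  have := (ZMod.natCast_eq_natCast_iff m n γ).1 h
  have h2 : m % γ = n % γ := this
  rcases Nat.lt_or_ge m γ with hm | hm
  · rcases Nat.lt_or_ge n γ with hn | hn
    · rwa [Nat.mod_eq_of_lt hm, Nat.mod_eq_of_lt hn] at h2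
    · have : n = γ := by omega
      subst this
      rw [Nat.mod_eq_of_lt hm, Nat.mod_self] at h2
      omega
  · have hmγ : m = γ := by omega
    rw [hmγ, Nat.mod_self] at h2
    rcases Nat.lt_or_ge n γ with hn | hn
    · rw [Nat.mod_eq_of_lt hn] at h2; omega
    · omega

section nat_side

variable {γ ℓ : ℕ} {k j : ℕ → ℕ}
variable (hℓ : 1 ≤ ℓ) (hk1 : k 1 = 1)
  (hkj : ∀ r, 1 ≤ r → r ≤ ℓ → k r < j r)
  (hjk : ∀ r, 1 ≤ r → r < ℓ → j r < k (r + 1))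
  (hjγ : j ℓ ≤ γ) (hklast : k (ℓ + 1) = γ + 1)

include hkj hjk hjγ hklast in
lemma JK : ∀ s, s ≤ ℓ + 1 → ∀ r, 1 ≤ r → r < s → j r < k s := by
  intro s
  induction s with
  | zero => omega
  | succ s ih =>
    intro hs r hr hrs
    have hs' : s ≤ ℓ := by omega
    have hlast : ∀ u, 1 ≤ u → u ≤ ℓ → j u < k (u + 1) := by
      intro u hu1 hu2
      rcases Nat.lt_or_ge u ℓ with h | h
      · exact hjk u hu1 h
      · have : u = ℓ := by omega
        subst this
        omega
    rcases Nat.lt_or_ge r s with h | h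
    · have h1 := ih (by omega) r hr h
      have h2 := hkj s (by omega) hs'
      have h3 := hlast s (by omega) hs'
      omega
    · have : r = s := by omega
      subst this
      exact hlast r hr hs'

include hk1 hkj hjk hjγ hklast in
lemma k_ge_one : ∀ r, 1 ≤ r → r ≤ ℓ + 1 → 1 ≤ k r := by
  intro r h1 h2
  rcases Nat.lt_or_ge 1 r with h | h
  · have := JK hkj hjk hjγ hklast r h2 1 le_rfl h
    have := hkj 1 le_rfl (by omega)
    omega
  · have : r = 1 := by omega
    subst this; omega

include hkj hjk hjγ hklast in
lemma j_le_γ : ∀ r, 1 ≤ r → r ≤ ℓ → j r ≤ γ := by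
  intro r h1 h2
  have := JK hkj hjk hjγ hklast (ℓ + 1) le_rfl r h1 (by omega)
  omega

include hkj hjk hjγ hklast in
lemma block_disjoint : ∀ t u m, 1 ≤ t → t ≤ ℓ → 1 ≤ u → u ≤ ℓ →
    k t ≤ m → m < j t → k u ≤ m → m < j u → t = u := by
  intro t u m ht1 ht2 hu1 hu2 h1 h2 h3 h4
  by_contra h
  rcases Nat.lt_or_ge t u with hlt | hge
  · have := JK hkj hjk hjγ hklast u (by omega) t ht1 hlt
    omega
  · have hlt : u < t := by omega
    have := JK hkj hjk hjγ hklast t (by omega) u hu1 hlt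
    omega

include hkj hjk hjγ hklast in
lemma gap_not_block : ∀ t m, 1 ≤ t → t ≤ ℓ → j t ≤ m → m < k (t + 1) →
    ¬ ∃ u, (1 ≤ u ∧ u ≤ ℓ) ∧ k u ≤ m ∧ m < j u := by
  rintro t m ht1 ht2 h1 h2 ⟨u, ⟨hu1, hu2⟩, h3, h4⟩
  rcases le_or_gt u t with h | h
  · -- j u ≤ j t ≤ m contradicts m < j u
    rcases Nat.lt_or_ge u t with h' | h'
    · have hju : j u < k t := by
        have := JK hkj hjk hjγ hklast t (by omega) u hu1 h'
        exact this
      have := hkj t ht1 ht2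
      omega
    · have : u = t := by omega
      subst this; omega
  · -- k u ≥ k (t+1) > m
    have : k (t + 1) ≤ k u := by
      rcases Nat.lt_or_ge (t + 1) u with h' | h'
      · have h5 := JK hkj hjk hjγ hklast u (by omega) (t + 1) (by omega) h'
        have h7 := hkj (t + 1) (by omega) (by omega)
        omega
      · have : u = t + 1 := by omega
        subst this; omega
    omega

set_option linter.unusedSectionVars false in
include hℓ hk1 hkj hjk hjγ hklast in
lemma totality : ∀ m, 1 ≤ m → m ≤ γ →
    (∃ t, (1 ≤ t ∧ t ≤ ℓ) ∧ k t ≤ m ∧ m < j t) ∨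
    (∃ t, (1 ≤ t ∧ t ≤ ℓ) ∧ j t ≤ m ∧ m < k (t + 1)) := by
  intro m hm1 hm2
  set T := (Finset.Icc 1 ℓ).filter (fun t => k t ≤ m) with hT
  have hne : T.Nonempty := ⟨1, by simp [hT, hk1, hm1, hℓ]⟩
  set t := T.max' hne with ht
  have htT : t ∈ T := T.max'_mem hne
  rw [hT, Finset.mem_filter, Finset.mem_Icc] at htT
  obtain ⟨⟨ht1, ht2⟩, ht3⟩ := htT
  rcases Nat.lt_or_ge m (j t) with h | h
  · exact Or.inl ⟨t, ⟨ht1, ht2⟩, ht3, h⟩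
  · refine Or.inr ⟨t, ⟨ht1, ht2⟩, h, ?_⟩
    by_contra h'
    have hkt : k (t + 1) ≤ m := by omega
    have : t + 1 ∈ T := by
      rw [hT, Finset.mem_filter, Finset.mem_Icc]
      refine ⟨⟨by omega, ?_⟩, hkt⟩
      by_contra h''
      have : t + 1 = ℓ + 1 := by omega
      rw [this] at hkt
      omega
    have := Finset.le_max' T (t + 1) this
    omega

end nat_side

lemma D1 (γ : ℕ) [NeZero γ] (hγ : 3 ≤ γ)
    (g : ZMod γ → ℕ)
    (ℓ : ℕ) (hℓ : 1 ≤ ℓ) (k j : ℕ → ℕ)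
    (hk1 : k 1 = 1)
    (hkj : ∀ r, 1 ≤ r → r ≤ ℓ → k r < j r)
    (hjk : ∀ r, 1 ≤ r → r < ℓ → j r < k (r + 1))
    (hjγ : j ℓ ≤ γ)
    (hklast : k (ℓ + 1) = γ + 1)
    (d : ZMod γ → ℤ)
    (hdk : ∀ r, 1 ≤ r → r ≤ ℓ → d ((k r : ZMod γ)) = (g ((k r : ZMod γ)) : ℤ) - 1)
    (hdj : ∀ r, 1 ≤ r → r ≤ ℓ → d ((j r : ZMod γ)) = (g ((j r : ZMod γ)) : ℤ) + 1)
    (hdo : ∀ i : ZMod γ, (¬ ∃ r, 1 ≤ r ∧ r ≤ ℓ ∧ i = (k r : ZMod γ)) →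
      (¬ ∃ r, 1 ≤ r ∧ r ≤ ℓ ∧ i = (j r : ZMod γ)) → d i = (g i : ℤ)) :
    ∀ i : ZMod γ, d i - (g i : ℤ) = Fn ℓ k j i.val - Fn ℓ k j ((i - 1).val) := by
  have JK' := JK hkj hjk hjγ hklast
  have hjle := j_le_γ hkj hjk hjγ hklast
  have jk1 : ∀ u, 1 ≤ u → u ≤ ℓ → j u < k (u + 1) := by
    intro u h1 h2
    rcases Nat.lt_or_ge u ℓ with h | h
    · exact hjk u h1 h
    · have : u = ℓ := by omega
      subst this; omega
  have kγ : ∀ r, 1 ≤ r → r ≤ ℓ → k r < γ := by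
    intro r h1 h2
    have := hkj r h1 h2
    have := hjle r h1 h2
    omega
  have castk : ∀ r, 1 ≤ r → r ≤ ℓ → ((k r : ℕ) : ZMod γ).val = k r :=
    fun r h1 h2 => ZMod.val_cast_of_lt (kγ r h1 h2)
  have jmono : ∀ r s, 1 ≤ r → r < s → s ≤ ℓ → j r < j s := by
    intro r s h1 h2 h3
    have := JK' s (by omega) r h1 h2
    have := hkj s (by omega) h3
    omega
  have notK : ∀ i : ZMod γ, (∀ r, 1 ≤ r → r ≤ ℓ → i.val ≠ k r) →
      ¬ ∃ r, 1 ≤ r ∧ r ≤ ℓ ∧ i = ((k r : ℕ) : ZMod γ) := by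
    rintro i h ⟨r, h1, h2, rfl⟩
    exact h r h1 h2 (castk r h1 h2)
  have notJ : ∀ i : ZMod γ, i.val ≠ 0 → (∀ r, 1 ≤ r → r ≤ ℓ → i.val ≠ j r) →
      ¬ ∃ r, 1 ≤ r ∧ r ≤ ℓ ∧ i = ((j r : ℕ) : ZMod γ) := by
    rintro i hv h ⟨r, h1, h2, rfl⟩
    rcases Nat.lt_or_ge (j r) γ with hj | hj
    · exact h r h1 h2 (ZMod.val_cast_of_lt hj)
    · have hjr : j r = γ := by
        have := hjle r h1 h2; omega
      apply hv
      rw [hjr, ZMod.natCast_self]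
      simp
  intro i
  rcases Nat.eq_zero_or_pos i.val with hv | hv
  · -- i = 0
    have hi0 : i = 0 := (ZMod.val_eq_zero i).1 hv
    have hFv : Fn ℓ k j i.val = 0 := by
      rw [hv, Fn_eq_zero_iff]
      rintro ⟨t, ⟨h1, h2⟩, h3, h4⟩
      have := k_ge_one hk1 hkj hjk hjγ hklast t h1 (by omega)
      omega
    have hval1 : ((i - 1)).val = γ - 1 := by rw [hi0]; exact val_zero_sub_one
    rcases Nat.lt_or_ge (j ℓ) γ with hjℓ | hjℓ
    · -- ordinary
      have hd : d i = (g i : ℤ) := by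
        apply hdo
        · apply notK
          intro r h1 h2 hc
          have := kγ r h1 h2
          have h3 := hk1
          rcases Nat.lt_or_ge 1 r with hr | hr
          · have := JK' r (by omega) 1 le_rfl hr
            have := hkj 1 le_rfl (by omega)
            omega
          · have : r = 1 := by omega
            subst this; omega
        · rintro ⟨r, h1, h2, hc⟩
          have hjr : j r < γ := by
            rcases Nat.lt_or_ge r ℓ with h | h
            · have := jmono r ℓ h1 h (le_rfl); omega
            · have : r = ℓ := by omega
              subst this; omega
          rw [hc] at hv
          rw [ZMod.val_cast_of_lt hjr] at hv
          have := hkj r h1 h2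
          have := k_ge_one hk1 hkj hjk hjγ hklast r h1 (by omega)
          omega
      have hFv1 : Fn ℓ k j (γ - 1) = 0 := by
        rw [Fn_eq_zero_iff]
        rintro ⟨t, ⟨h1, h2⟩, h3, h4⟩
        have : j t ≤ j ℓ := by
          rcases Nat.lt_or_ge t ℓ with h | h
          · have := jmono t ℓ h1 h le_rfl; omega
          · have : t = ℓ := by omega
            subst this; omega
        omega
      rw [hd, hFv, hval1, hFv1]; ring
    · -- j ℓ = γ
      have hjℓγ : j ℓ = γ := by omega
      have hd : d i = (g i : ℤ) + 1 := by
        have := hdj ℓ hℓ le_rfl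
        rw [hjℓγ, ZMod.natCast_self] at this
        rw [hi0]; exact this
      have hFv1 : Fn ℓ k j (γ - 1) = -1 := by
        rw [Fn_eq_neg_one_iff]
        refine ⟨ℓ, ⟨hℓ, le_rfl⟩, ?_, ?_⟩
        · have := hkj ℓ hℓ le_rfl; omega
        · have := hkj ℓ hℓ le_rfl; omega
      rw [hd, hFv, hval1, hFv1]; ring
  · -- i.val ≥ 1
    have hine : i ≠ 0 := fun h => by rw [h] at hv; simp at hv
    have hval1 : (i - 1).val = i.val - 1 := val_sub_one i hine
    have hvγ : i.val < γ := ZMod.val_lt i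
    have hcast : ((i.val : ℕ) : ZMod γ) = i := ZMod.natCast_rightInverse i
    rcases totality hℓ hk1 hkj hjk hjγ hklast i.val hv (by omega) with
      ⟨t, ⟨ht1, ht2⟩, h3, h4⟩ | ⟨t, ⟨ht1, ht2⟩, h3, h4⟩
    · -- block: k t ≤ v < j t
      have hFv : Fn ℓ k j i.val = -1 := by
        rw [Fn_eq_neg_one_iff]; exact ⟨t, ⟨ht1, ht2⟩, h3, h4⟩
      rcases Nat.eq_or_lt_of_le h3 with heq | hlt
      · -- v = k t
        have hd : d i = (g i : ℤ) - 1 := by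
          have := hdk t ht1 ht2
          rw [heq, hcast] at this
          exact this
        have hFv1 : Fn ℓ k j (i.val - 1) = 0 := by
          rw [Fn_eq_zero_iff]
          rcases Nat.lt_or_ge 1 t with ht | ht
          · have hjt1 := JK' t (by omega) (t - 1) (by omega) (by omega)
            have ht' : t - 1 + 1 = t := by omega
            apply gap_not_block hkj hjk hjγ hklast (t - 1) (i.val - 1) (by omega) (by omega)
              (by omega) (by rw [ht']; omega)
          · have : t = 1 := by omega
            subst this
            rw [← heq, hk1]
            rintro ⟨u, ⟨h1, h2⟩, h5, h6⟩
            have := k_ge_one hk1 hkj hjk hjγ hklast u h1 (by omega)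
            omega
        rw [hd, hFv, hval1, hFv1]; ring
      · -- k t < v < j t : ordinary
        have hd : d i = (g i : ℤ) := by
          apply hdo
          · apply notK
            intro r h1 h2 hc
            -- v = k r, and v in block t: block r also contains v: t = r, contra v > k t
            have h5 : k r ≤ i.val ∧ i.val < j r := ⟨hc.ge, by rw [hc]; exact hkj r h1 h2⟩
            have heq2 := block_disjoint hkj hjk hjγ hklast t r i.val ht1 ht2 h1 h2 h3 h4 h5.1 h5.2
            rw [heq2] at hlt
            omega
          · apply notJ i (by omega)
            intro r h1 h2 hc
            -- v = j r in block t; but j r in gap r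
            exact gap_not_block hkj hjk hjγ hklast r i.val h1 h2 hc.ge
              (by rw [hc]; exact jk1 r h1 h2) ⟨t, ⟨ht1, ht2⟩, h3, h4⟩
        have hFv1 : Fn ℓ k j (i.val - 1) = -1 := by
          rw [Fn_eq_neg_one_iff]
          exact ⟨t, ⟨ht1, ht2⟩, by omega, by omega⟩
        rw [hd, hFv, hval1, hFv1]; ring
    · -- gap: j t ≤ v < k (t+1)
      have hFv : Fn ℓ k j i.val = 0 := by
        rw [Fn_eq_zero_iff]
        exact gap_not_block hkj hjk hjγ hklast t i.val ht1 ht2 h3 h4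
      rcases Nat.eq_or_lt_of_le h3 with heq | hlt
      · -- v = j t
        have hd : d i = (g i : ℤ) + 1 := by
          have := hdj t ht1 ht2
          rw [heq, hcast] at this
          exact this
        have hFv1 : Fn ℓ k j (i.val - 1) = -1 := by
          rw [Fn_eq_neg_one_iff]
          refine ⟨t, ⟨ht1, ht2⟩, ?_, ?_⟩
          · have := hkj t ht1 ht2; omega
          · have := hkj t ht1 ht2; omega
        rw [hd, hFv, hval1, hFv1]; ring
      · -- j t < v < k (t+1): ordinary
        have hd : d i = (g i : ℤ) := by
          apply hdo
          · apply notK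
            intro r h1 h2 hc
            exact gap_not_block hkj hjk hjγ hklast t i.val ht1 ht2 h3 h4
              ⟨r, ⟨h1, h2⟩, hc.ge, by rw [hc]; exact hkj r h1 h2⟩
          · apply notJ i (by omega)
            intro r h1 h2 hc
            -- v = j r, j t < v < k (t+1)
            rcases Nat.lt_or_ge r (t + 1) with h | h
            · -- r ≤ t: j r ≤ j t < v contra
              rcases Nat.lt_or_ge r t with h' | h'
              · have := jmono r t h1 h' ht2; omega
              · have : r = t := by omega
                subst this; omega
            · -- r ≥ t+1: j r > k r ≥ k (t+1) > v
              have hkr : k (t + 1) ≤ k r := by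
                rcases Nat.lt_or_ge (t + 1) r with h' | h'
                · have h5 := JK' r (by omega) (t + 1) (by omega) h'
                  have := hkj (t + 1) (by omega) (by omega)
                  omega
                · have : r = t + 1 := by omega
                  subst this; omega
              have := hkj r h1 h2
              omega
        have hFv1 : Fn ℓ k j (i.val - 1) = 0 := by
          rw [Fn_eq_zero_iff]
          exact gap_not_block hkj hjk hjγ hklast t (i.val - 1) ht1 ht2 (by omega) (by omega)
        rw [hd, hFv, hval1, hFv1]; ring

section ebridge
variable {γ : ℕ} [NeZero γ]
set_option linter.unusedSectionVars false

lemma eMult_univ (d : ZMod γ → ℤ) (i : ZMod γ) : eMult d Finset.univ i = d i := by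
  simp [eMult]

variable {a b : ZMod γ} (hp : (b - a).val < γ - 1)

include hp

lemma arc_ne_univ : arcZ a b ≠ univ := by
  intro h
  have := arc_sub_one_left hp
  rw [h] at this
  exact this (mem_univ _)

lemma e_on_arc (d : ZMod γ → ℤ) {i : ZMod γ} (hi : i ∈ arcZ a b) :
    eMult d (arcZ a b) i
      = d i - (if i = a then 1 else 0) - (if i = b then 1 else 0) := by
  rw [eMult]
  have h1 : (if i - 1 ∈ arcZ a b then (0:ℤ) else 1) = if i = a then 1 else 0 := by
    by_cases h : i = a
    · rw [if_pos h, if_neg (by rw [h]; exact arc_sub_one_left hp)]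
    · rw [if_pos ((sub_one_mem_arcZ hp hi).2 h), if_neg h]
  have h2 : (if i + 1 ∈ arcZ a b then (0:ℤ) else 1) = if i = b then 1 else 0 := by
    by_cases h : i = b
    · rw [if_pos h, if_neg (by
        intro hc
        exact ((add_one_mem_arcZ hp hi).1 hc) h)]
    · rw [if_pos ((add_one_mem_arcZ hp hi).2 h), if_neg h]
  rw [h1, h2]

lemma sum_e_sub (d : ZMod γ → ℤ) {Y : Finset (ZMod γ)} (hY : Y ⊆ arcZ a b) :
    ∑ i ∈ Y, eMult d (arcZ a b) i
      = ∑ i ∈ Y, d i - (if a ∈ Y then 1 else 0) - (if b ∈ Y then 1 else 0) := by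
  have : ∑ i ∈ Y, eMult d (arcZ a b) i
      = ∑ i ∈ Y, (d i - (if i = a then 1 else 0) - (if i = b then 1 else 0)) :=
    Finset.sum_congr rfl (fun i hi => e_on_arc hp d (hY hi))
  rw [this]
  rw [Finset.sum_sub_distrib, Finset.sum_sub_distrib]
  rw [Finset.sum_ite_eq' Y a (fun _ => (1:ℤ)), Finset.sum_ite_eq' Y b (fun _ => (1:ℤ))]

lemma sum_e_arc (d : ZMod γ → ℤ) :
    ∑ i ∈ arcZ a b, eMult d (arcZ a b) i = (∑ i ∈ arcZ a b, d i) - 2 := by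
  rw [sum_e_sub hp d (Finset.Subset.refl _), if_pos (left_mem_arcZ _ _),
    if_pos (right_mem_arcZ _ _)]
  ring

end ebridge



lemma val_cast_pred (γ : ℕ) [NeZero γ] (a : ℕ) (h1 : 1 ≤ a) (h2 : a ≤ γ) :
    ((a : ZMod γ) - 1).val = a - 1 := by
  have hrw : (a : ZMod γ) - 1 = ((a - 1 : ℕ) : ZMod γ) := by
    push_cast [Nat.cast_sub h1]
    ring
  rw [hrw, ZMod.val_cast_of_lt (by omega)]

section main
variable (γ : ℕ) [NeZero γ] (hγ : 3 ≤ γ)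
    (g : ZMod γ → ℕ) (hg : ∀ i, 1 ≤ g i)
    (ℓ : ℕ) (hℓ : 1 ≤ ℓ) (k j : ℕ → ℕ)
    (hk1 : k 1 = 1)
    (hkj : ∀ r, 1 ≤ r → r ≤ ℓ → k r < j r)
    (hjk : ∀ r, 1 ≤ r → r < ℓ → j r < k (r + 1))
    (hjγ : j ℓ ≤ γ)
    (hklast : k (ℓ + 1) = γ + 1)
    (d : ZMod γ → ℤ)
    (hdk : ∀ r, 1 ≤ r → r ≤ ℓ → d ((k r : ZMod γ)) = (g ((k r : ZMod γ)) : ℤ) - 1)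
    (hdj : ∀ r, 1 ≤ r → r ≤ ℓ → d ((j r : ZMod γ)) = (g ((j r : ZMod γ)) : ℤ) + 1)
    (hdo : ∀ i : ZMod γ, (¬ ∃ r, 1 ≤ r ∧ r ≤ ℓ ∧ i = (k r : ZMod γ)) →
      (¬ ∃ r, 1 ≤ r ∧ r ≤ ℓ ∧ i = (j r : ZMod γ)) → d i = (g i : ℤ))

set_option linter.unusedSectionVars false

include hγ hℓ hk1 hkj hjk hjγ hklast in
lemma keyfacts {a b : ℕ}
    (ha : ∃ r, (1 ≤ r ∧ r ≤ ℓ) ∧ k r < a ∧ a ≤ j r)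
    (hb : ∃ s, (1 ≤ s ∧ s ≤ ℓ) ∧ j s ≤ b ∧ b < k (s + 1)) :
    Fn ℓ k j (((a : ZMod γ) - 1).val) = -1 ∧ Fn ℓ k j ((b : ZMod γ)).val = 0 ∧
      ((b : ZMod γ) - (a : ZMod γ)).val < γ - 1 := by
  obtain ⟨r, ⟨hr1, hr2⟩, har1, har2⟩ := ha
  obtain ⟨s, ⟨hs1, hs2⟩, hbs1, hbs2⟩ := hb
  have hk1r := k_ge_one hk1 hkj hjk hjγ hklast r hr1 (by omega)
  have hjrγ := j_le_γ hkj hjk hjγ hklast r hr1 hr2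
  have hksle : k (s + 1) ≤ γ + 1 := by
    rcases Nat.lt_or_ge (s + 1) (ℓ + 1) with h | h
    · have h5 := JK hkj hjk hjγ hklast (ℓ + 1) le_rfl (s + 1) (by omega) h
      have := j_le_γ hkj hjk hjγ hklast (s + 1) (by omega) (by omega)
      have := hkj (s + 1) (by omega) (by omega)
      omega
    · have : s + 1 = ℓ + 1 := by omega
      rw [this, hklast]
  have hks1 := hkj s hs1 hs2
  have hkk1 := k_ge_one hk1 hkj hjk hjγ hklast s hs1 (by omega)
  have ha1 : 2 ≤ a := by omega
  have ha2 : a ≤ γ := by omega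
  have hb1 : 2 ≤ b := by omega
  have hb2 : b ≤ γ := by omega
  have hFa : Fn ℓ k j (((a : ZMod γ) - 1).val) = -1 := by
    rw [val_cast_pred γ a (by omega) ha2, Fn_eq_neg_one_iff]
    exact ⟨r, ⟨hr1, hr2⟩, by omega, by omega⟩
  have hFb : Fn ℓ k j ((b : ZMod γ)).val = 0 := by
    rcases Nat.lt_or_ge b γ with hlt | hge
    · rw [ZMod.val_cast_of_lt hlt, Fn_eq_zero_iff]
      exact gap_not_block hkj hjk hjγ hklast s b hs1 hs2 hbs1 hbs2
    · have hbγ : b = γ := by omega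
      rw [hbγ, ZMod.natCast_self]
      have : (0 : ZMod γ).val = 0 := by simp
      rw [this, Fn_eq_zero_iff]
      rintro ⟨t, ⟨ht1, ht2⟩, h3, h4⟩
      have := k_ge_one hk1 hkj hjk hjγ hklast t ht1 (by omega)
      omega
  refine ⟨hFa, hFb, ?_⟩
  have hval := ZMod.val_lt ((b : ZMod γ) - (a : ZMod γ))
  rcases Nat.lt_or_ge (((b : ZMod γ) - (a : ZMod γ)).val) (γ - 1) with h | h
  · exact h
  · exfalso
    have heq : ((b : ZMod γ) - (a : ZMod γ)).val = γ - 1 := by omega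
    have h1 : (b : ZMod γ) - (a : ZMod γ) = ((γ - 1 : ℕ) : ZMod γ) := by
      rw [← heq]
      exact (ZMod.natCast_rightInverse _).symm
    have h2 : ((b + 1 : ℕ) : ZMod γ) = ((a : ℕ) : ZMod γ) := by
      push_cast
      have h3 : ((γ - 1 : ℕ) : ZMod γ) + 1 = 0 := by
        have h4 : ((γ - 1 : ℕ) : ZMod γ) + 1 = ((γ - 1 + 1 : ℕ) : ZMod γ) := by push_cast; ring
        have h5 : γ - 1 + 1 = γ := by omega
        rw [h4, h5, ZMod.natCast_self]
      linear_combination h1 + h3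
    rcases Nat.lt_or_ge b γ with hlt | hge
    · have hba : b + 1 = a :=
        cast_inj_of_le γ (b + 1) a (by omega) (by omega) (by omega) (by omega) ha2 h2
      -- then a - 1 = b is in a block and in a gap
      have : Fn ℓ k j (a - 1) = -1 := by
        rw [Fn_eq_neg_one_iff]
        exact ⟨r, ⟨hr1, hr2⟩, by omega, by omega⟩
      have h0 : Fn ℓ k j (a - 1) = 0 := by
        rw [Fn_eq_zero_iff]
        have hab : a - 1 = b := by omega
        rw [hab]
        exact gap_not_block hkj hjk hjγ hklast s b hs1 hs2 hbs1 hbs2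
      omega
    · have hbγ : b = γ := by omega
      have h6 : ((b + 1 : ℕ) : ZMod γ) = ((1 : ℕ) : ZMod γ) := by
        rw [hbγ]
        push_cast [ZMod.natCast_self]
        ring
      have ha1' : a = 1 := by
        have := cast_inj_of_le γ a 1 (by omega) (by omega) ha2 le_rfl (by omega)
          (by rw [← h2, h6])
        omega
      omega

include hγ hg hℓ hk1 hkj hjk hjγ hklast hdk hdj hdo in
lemma adm_univ : Admissible g d Finset.univ := by
  have hd1 := D1 γ hγ g ℓ hℓ k j hk1 hkj hjk hjγ hklast d hdk hdj hdo
  have hFb : ∀ x : ZMod γ, -1 ≤ Fn ℓ k j x.val ∧ Fn ℓ k j x.val ≤ 0 :=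
    fun x => Fn_bounds ℓ k j x.val
  have hsum : ∀ Y : Finset (ZMod γ), ∑ i ∈ Y, d i
      = ∑ i ∈ Y, (g i : ℤ) + ∑ i ∈ Y, (Fn ℓ k j i.val - Fn ℓ k j ((i - 1)).val) := by
    intro Y
    rw [← Finset.sum_add_distrib]
    exact Finset.sum_congr rfl (fun i _ => by have := hd1 i; linarith)
  unfold Admissible
  refine ⟨⟨0, mem_univ 0⟩, Or.inl rfl, ?_, ?_, ?_⟩
  · intro i _
    rw [eMult_univ]
    have h0 := hd1 i
    have h1 := hFb i
    have h2 := hFb (i - 1)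
    have h3 := hg i
    omega
  · have h1 : ∑ i ∈ univ, eMult d univ i = ∑ i : ZMod γ, d i :=
      Finset.sum_congr rfl (fun i _ => eMult_univ d i)
    have h2 := sum_univ_tele (fun x : ZMod γ => Fn ℓ k j x.val)
    simp only [gSub, if_pos rfl]
    rw [h1, hsum]
    rw [h2]
    norm_num
  · intro Y hY hne hne2
    have h1 : ∑ i ∈ Y, eMult d univ i = ∑ i ∈ Y, d i :=
      Finset.sum_congr rfl (fun i _ => eMult_univ d i)
    rw [h1, hsum]
    have hm := master (fun x => Fn ℓ k j x.val) hFb Y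
    linarith

include hγ hg hℓ hk1 hkj hjk hjγ hklast hdk hdj hdo in
lemma adm_arc {a b : ℕ}
    (ha : ∃ r, (1 ≤ r ∧ r ≤ ℓ) ∧ k r < a ∧ a ≤ j r)
    (hb : ∃ s, (1 ≤ s ∧ s ≤ ℓ) ∧ j s ≤ b ∧ b < k (s + 1)) :
    Admissible g d (arcZ (a : ZMod γ) (b : ZMod γ)) := by
  obtain ⟨hFa, hFb0, hp⟩ := keyfacts γ hγ ℓ hℓ k j hk1 hkj hjk hjγ hklast ha hb
  have hd1 := D1 γ hγ g ℓ hℓ k j hk1 hkj hjk hjγ hklast d hdk hdj hdo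
  have hFb : ∀ x : ZMod γ, -1 ≤ Fn ℓ k j x.val ∧ Fn ℓ k j x.val ≤ 0 :=
    fun x => Fn_bounds ℓ k j x.val
  have hsum : ∀ Y : Finset (ZMod γ), ∑ i ∈ Y, d i
      = ∑ i ∈ Y, (g i : ℤ) + ∑ i ∈ Y, (Fn ℓ k j i.val - Fn ℓ k j ((i - 1)).val) := by
    intro Y
    rw [← Finset.sum_add_distrib]
    exact Finset.sum_congr rfl (fun i _ => by have := hd1 i; linarith)
  have harc := sum_arc (fun x : ZMod γ => Fn ℓ k j x.val) hp
  unfold Admissible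
  refine ⟨⟨(a : ZMod γ), left_mem_arcZ _ _⟩, Or.inr (arc_ncirc hp), ?_, ?_, ?_⟩
  · intro i hi
    rw [e_on_arc hp d hi]
    have h1 := hd1 i
    have h2 := hFb i
    have h3 := hFb (i - 1)
    have h4 := hg i
    by_cases hia : i = (a : ZMod γ)
    · have hFia : Fn ℓ k j ((i - 1)).val = -1 := by rw [hia]; exact hFa
      by_cases hib : i = (b : ZMod γ)
      · have hFib : Fn ℓ k j i.val = 0 := by rw [hib]; exact hFb0
        rw [if_pos hia, if_pos hib]; omega
      · rw [if_pos hia, if_neg hib]; omega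
    · by_cases hib : i = (b : ZMod γ)
      · have hFib : Fn ℓ k j i.val = 0 := by rw [hib]; exact hFb0
        rw [if_neg hia, if_pos hib]; omega
      · rw [if_neg hia, if_neg hib]; omega
  · rw [sum_e_arc hp d, hsum]
    simp only [gSub, if_neg (arc_ne_univ hp)]
    rw [harc, hFa, hFb0]
    ring
  · intro Y hY hne hne2
    rw [sum_e_sub hp d hY, hsum]
    have hm := master' (fun x : ZMod γ => Fn ℓ k j x.val) hFb Y (a : ZMod γ) (b : ZMod γ)
      hFa hFb0
      (fun haY hc => (arc_sub_one_left hp) (hY hc))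
      (fun hbY hc => ((add_one_mem_arcZ hp (right_mem_arcZ _ _)).1 (hY hc)) rfl)
    linarith

include hγ hg hℓ hk1 hkj hjk hjγ hklast hdk hdj hdo in
lemma adm_conv {Z : Finset (ZMod γ)} (hZ : Admissible g d Z) :
    Z = Finset.univ ∨ ∃ a b : ℕ,
      (∃ r, (1 ≤ r ∧ r ≤ ℓ) ∧ k r < a ∧ a ≤ j r) ∧
      (∃ s, (1 ≤ s ∧ s ≤ ℓ) ∧ j s ≤ b ∧ b < k (s + 1)) ∧
      Z = arcZ (a : ZMod γ) (b : ZMod γ) := by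
  unfold Admissible at hZ
  obtain ⟨hne, hcon, heff, hdeg, hsemi⟩ := hZ
  rcases hcon with h | h
  · exact Or.inl h
  right
  have hZuniv : Z ≠ Finset.univ := by
    intro hc
    rw [hc, ncirc_univ] at h
    omega
  obtain ⟨a₀, b₀, rfl⟩ := exists_arc hne h
  have hp : (b₀ - a₀).val < γ - 1 := by
    have := ZMod.val_lt (b₀ - a₀)
    rcases Nat.lt_or_ge ((b₀ - a₀).val) (γ - 1) with h' | h'
    · exact h'
    · exact absurd (arc_eq_univ h') hZuniv
  have hd1 := D1 γ hγ g ℓ hℓ k j hk1 hkj hjk hjγ hklast d hdk hdj hdo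
  have hFb : ∀ x : ZMod γ, -1 ≤ Fn ℓ k j x.val ∧ Fn ℓ k j x.val ≤ 0 :=
    fun x => Fn_bounds ℓ k j x.val
  have hsum : ∀ Y : Finset (ZMod γ), ∑ i ∈ Y, d i
      = ∑ i ∈ Y, (g i : ℤ) + ∑ i ∈ Y, (Fn ℓ k j i.val - Fn ℓ k j ((i - 1)).val) := by
    intro Y
    rw [← Finset.sum_add_distrib]
    exact Finset.sum_congr rfl (fun i _ => by have := hd1 i; linarith)
  have harc := sum_arc (fun x : ZMod γ => Fn ℓ k j x.val) hp
  rw [sum_e_arc hp d, hsum, harc] at hdeg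
  simp only [gSub, if_neg hZuniv] at hdeg
  have hkey : Fn ℓ k j ((b₀ : ZMod γ).val) - Fn ℓ k j ((a₀ - 1).val) = 1 := by linarith
  have hFa : Fn ℓ k j ((a₀ - 1).val) = -1 := by
    have h2 := hFb (a₀ - 1)
    have h3 := hFb b₀
    omega
  have hFb0 : Fn ℓ k j (b₀.val) = 0 := by
    have h2 := hFb (a₀ - 1)
    have h3 := hFb b₀
    omega
  obtain ⟨r, ⟨hr1, hr2⟩, hra, hrb⟩ := (Fn_eq_neg_one_iff ℓ k j _).1 hFa
  have hacast : (((a₀ - 1).val + 1 : ℕ) : ZMod γ) = a₀ := by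
    push_cast
    rw [ZMod.natCast_rightInverse (a₀ - 1)]
    ring
  have hA : ∃ r', (1 ≤ r' ∧ r' ≤ ℓ) ∧ k r' < (a₀ - 1).val + 1 ∧ (a₀ - 1).val + 1 ≤ j r' :=
    ⟨r, ⟨hr1, hr2⟩, by omega, by omega⟩
  rcases Nat.eq_zero_or_pos b₀.val with hv | hv
  · have hb0 : b₀ = 0 := (ZMod.val_eq_zero b₀).1 hv
    refine ⟨(a₀ - 1).val + 1, γ, hA, ⟨ℓ, ⟨hℓ, le_rfl⟩, hjγ, by rw [hklast]; omega⟩, ?_⟩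
    have hbcast : ((γ : ℕ) : ZMod γ) = b₀ := by rw [ZMod.natCast_self, hb0]
    rw [hacast, hbcast]
  · have hvγ : b₀.val < γ := ZMod.val_lt b₀
    rcases totality hℓ hk1 hkj hjk hjγ hklast b₀.val hv (by omega) with hbl | hgap
    · exfalso
      have : Fn ℓ k j (b₀.val) = -1 := (Fn_eq_neg_one_iff ℓ k j _).2 hbl
      omega
    · refine ⟨(a₀ - 1).val + 1, b₀.val, hA, hgap, ?_⟩
      have hbcast : ((b₀.val : ℕ) : ZMod γ) = b₀ := ZMod.natCast_rightInverse b₀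
      rw [hacast, hbcast]


end main

/-- Proposition 4.3: for a strictly semistable multidegree `d` given by the alternating data
`1 = k₁ < j₁ < k₂ < ⋯ < k_ℓ < j_ℓ ≤ γ` (with `k_{ℓ+1} = γ + 1`) on a circular curve all of
whose components have positive genus, `d` is effective and the number of admissible subsets
(equivalently, of irreducible components of `W_d(C)`) is
`1 + Σ_{r,s} (j_r − k_r)(k_{s+1} − j_s)`. -/
theorem circular_count_components (γ : ℕ) [NeZero γ] (hγ : 3 ≤ γ)
    (g : ZMod γ → ℕ) (hg : ∀ i, 1 ≤ g i)
    (ℓ : ℕ) (hℓ : 1 ≤ ℓ) (k j : ℕ → ℕ)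
    (hk1 : k 1 = 1)
    (hkj : ∀ r, 1 ≤ r → r ≤ ℓ → k r < j r)
    (hjk : ∀ r, 1 ≤ r → r < ℓ → j r < k (r + 1))
    (hjγ : j ℓ ≤ γ)
    (hklast : k (ℓ + 1) = γ + 1)
    (d : ZMod γ → ℤ)
    (hdk : ∀ r, 1 ≤ r → r ≤ ℓ → d ((k r : ZMod γ)) = (g ((k r : ZMod γ)) : ℤ) - 1)
    (hdj : ∀ r, 1 ≤ r → r ≤ ℓ → d ((j r : ZMod γ)) = (g ((j r : ZMod γ)) : ℤ) + 1)
    (hdo : ∀ i : ZMod γ, (¬ ∃ r, 1 ≤ r ∧ r ≤ ℓ ∧ i = (k r : ZMod γ)) →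
      (¬ ∃ r, 1 ≤ r ∧ r ≤ ℓ ∧ i = (j r : ZMod γ)) → d i = (g i : ℤ)) :
    (∀ i, 0 ≤ d i) ∧
      {Z : Finset (ZMod γ) | Admissible g d Z}.ncard =
        1 + ∑ r ∈ Finset.Icc 1 ℓ, ∑ s ∈ Finset.Icc 1 ℓ,
          (j r - k r) * (k (s + 1) - j s) := by
  have hd1 := D1 γ hγ g ℓ hℓ k j hk1 hkj hjk hjγ hklast d hdk hdj hdo
  have hjle := j_le_γ hkj hjk hjγ hklast
  have hksle : ∀ s, 1 ≤ s → s ≤ ℓ → k (s + 1) ≤ γ + 1 := by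
    intro s hs1 hs2
    rcases Nat.lt_or_ge (s + 1) (ℓ + 1) with h | h
    · have h5 := JK hkj hjk hjγ hklast (ℓ + 1) le_rfl (s + 1) (by omega) h
      have := hjle (s + 1) (by omega) (by omega)
      have := hkj (s + 1) (by omega) (by omega)
      omega
    · have : s + 1 = ℓ + 1 := by omega
      rw [this, hklast]
  constructor
  · intro i
    have h0 := hd1 i
    have h1 := Fn_bounds ℓ k j i.val
    have h2 := Fn_bounds ℓ k j ((i - 1)).val
    have h3 := hg i
    omega
  · classical
    set A := (Finset.Icc 1 ℓ).biUnion (fun r => Finset.Ioc (k r) (j r)) with hA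
    set B := (Finset.Icc 1 ℓ).biUnion (fun s => Finset.Ico (j s) (k (s + 1))) with hB
    set f : ℕ × ℕ → Finset (ZMod γ) := fun p => arcZ (p.1 : ZMod γ) (p.2 : ZMod γ) with hf
    set S := insert (Finset.univ : Finset (ZMod γ)) ((A ×ˢ B).image f) with hS
    have hmemA : ∀ a : ℕ, a ∈ A ↔ ∃ r, (1 ≤ r ∧ r ≤ ℓ) ∧ k r < a ∧ a ≤ j r := by
      intro a
      rw [hA]
      simp only [Finset.mem_biUnion, Finset.mem_Ioc, Finset.mem_Icc]
    have hmemB : ∀ b : ℕ, b ∈ B ↔ ∃ s, (1 ≤ s ∧ s ≤ ℓ) ∧ j s ≤ b ∧ b < k (s + 1) := by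
      intro b
      rw [hB]
      simp only [Finset.mem_biUnion, Finset.mem_Ico, Finset.mem_Icc]
    have hprop : ∀ p : ℕ × ℕ, p ∈ A ×ˢ B →
        (((p.2 : ℕ) : ZMod γ) - ((p.1 : ℕ) : ZMod γ)).val < γ - 1 := by
      intro p hp
      rw [Finset.mem_product] at hp
      exact (keyfacts γ hγ ℓ hℓ k j hk1 hkj hjk hjγ hklast
        ((hmemA p.1).1 hp.1) ((hmemB p.2).1 hp.2)).2.2
    have hset : {Z : Finset (ZMod γ) | Admissible g d Z} = ↑S := by
      ext Z
      rw [hS]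
      simp only [Set.mem_setOf_eq, Finset.coe_insert, Set.mem_insert_iff, Finset.coe_image,
        Set.mem_image, Finset.mem_coe]
      constructor
      · intro hZ
        rcases adm_conv γ hγ g hg ℓ hℓ k j hk1 hkj hjk hjγ hklast d hdk hdj hdo hZ with
          h | ⟨a, b, ha, hb, rfl⟩
        · exact Or.inl h
        · exact Or.inr ⟨(a, b), Finset.mem_product.2 ⟨(hmemA a).2 ha, (hmemB b).2 hb⟩, rfl⟩
      · intro hZ
        rcases hZ with rfl | ⟨p, hp, rfl⟩
        · exact adm_univ γ hγ g hg ℓ hℓ k j hk1 hkj hjk hjγ hklast d hdk hdj hdo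
        · have hp' := Finset.mem_product.1 hp
          exact adm_arc γ hγ g hg ℓ hℓ k j hk1 hkj hjk hjγ hklast d hdk hdj hdo
            ((hmemA p.1).1 hp'.1) ((hmemB p.2).1 hp'.2)
    rw [hset, Set.ncard_coe_finset]
    have huniv_ne : (Finset.univ : Finset (ZMod γ)) ∉ (A ×ˢ B).image f := by
      intro hc
      obtain ⟨p, hp, hfp⟩ := Finset.mem_image.1 hc
      exact arc_ne_univ (hprop p hp) hfp
    have hboundsA : ∀ a ∈ A, 1 ≤ a ∧ a ≤ γ := by
      intro a ha
      obtain ⟨r, ⟨h1, h2⟩, h3, h4⟩ := (hmemA a).1 ha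
      have := hjle r h1 h2
      omega
    have hboundsB : ∀ b ∈ B, 1 ≤ b ∧ b ≤ γ := by
      intro b hb
      obtain ⟨s', ⟨h1, h2⟩, h3, h4⟩ := (hmemB b).1 hb
      have := hksle s' h1 h2
      have := hkj s' h1 h2
      have := k_ge_one hk1 hkj hjk hjγ hklast s' h1 (by omega)
      omega
    have hinj : Set.InjOn f ↑(A ×ˢ B) := by
      intro p hp q hq hfpq
      rw [Finset.mem_coe] at hp hq
      have hpp := hprop p hp
      have hqq := hprop q hq
      have hp' := Finset.mem_product.1 hp
      have hq' := Finset.mem_product.1 hq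
      have hfpq' : arcZ ((p.1 : ℕ) : ZMod γ) ((p.2 : ℕ) : ZMod γ)
          = arcZ ((q.1 : ℕ) : ZMod γ) ((q.2 : ℕ) : ZMod γ) := hfpq
      have h1 : ({((p.1 : ℕ) : ZMod γ)} : Finset (ZMod γ)) = {((q.1 : ℕ) : ZMod γ)} := by
        rw [← arc_left_filter hpp, ← arc_left_filter hqq, hfpq']
      have h2 : ({((p.2 : ℕ) : ZMod γ)} : Finset (ZMod γ)) = {((q.2 : ℕ) : ZMod γ)} := by
        rw [← arc_sdiff_shift hpp, ← arc_sdiff_shift hqq, hfpq']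
      have e1 : p.1 = q.1 :=
        cast_inj_of_le γ p.1 q.1 (by omega) (hboundsA p.1 hp'.1).1 (hboundsA p.1 hp'.1).2
          (hboundsA q.1 hq'.1).1 (hboundsA q.1 hq'.1).2 (Finset.singleton_inj.1 h1)
      have e2 : p.2 = q.2 :=
        cast_inj_of_le γ p.2 q.2 (by omega) (hboundsB p.2 hp'.2).1 (hboundsB p.2 hp'.2).2
          (hboundsB q.2 hq'.2).1 (hboundsB q.2 hq'.2).2 (Finset.singleton_inj.1 h2)
      exact Prod.ext e1 e2
    have hcA : A.card = ∑ r ∈ Finset.Icc 1 ℓ, (j r - k r) := by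
      rw [hA, Finset.card_biUnion]
      · exact Finset.sum_congr rfl (fun r _ => Nat.card_Ioc _ _)
      · intro t ht u hu htu
        rw [Finset.mem_coe, Finset.mem_Icc] at ht hu
        rw [Function.onFun, Finset.disjoint_left]
        intro x hx hx'
        rw [Finset.mem_Ioc] at hx hx'
        rcases Nat.lt_or_ge t u with h | h
        · have := JK hkj hjk hjγ hklast u (by omega) t (by omega) h
          omega
        · have h' : u < t := by omega
          have := JK hkj hjk hjγ hklast t (by omega) u (by omega) h'
          omega
    have hcB : B.card = ∑ s ∈ Finset.Icc 1 ℓ, (k (s + 1) - j s) := by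
      rw [hB, Finset.card_biUnion]
      · exact Finset.sum_congr rfl (fun r _ => Nat.card_Ico _ _)
      · intro t ht u hu htu
        rw [Finset.mem_coe, Finset.mem_Icc] at ht hu
        rw [Function.onFun, Finset.disjoint_left]
        intro x hx hx'
        rw [Finset.mem_Ico] at hx hx'
        have hjk1t : j t < k (t + 1) := by
          have h5 := JK hkj hjk hjγ hklast (t + 1) (by omega) t (by omega) (by omega)
          exact h5
        have hjk1u : j u < k (u + 1) := by
          have h5 := JK hkj hjk hjγ hklast (u + 1) (by omega) u (by omega) (by omega)
          exact h5
        rcases Nat.lt_or_ge t u with h | h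
        · have h6 := JK hkj hjk hjγ hklast u (by omega) t (by omega) h
          have hku := hkj u (by omega) (by omega)
          have h7 : k (t + 1) ≤ k u := by
            rcases Nat.lt_or_ge (t + 1) u with h8 | h8
            · have h9 := JK hkj hjk hjγ hklast u (by omega) (t + 1) (by omega) h8
              have := hkj (t + 1) (by omega) (by omega)
              omega
            · have : u = t + 1 := by omega
              rw [this]
          omega
        · have h' : u < t := by omega
          have h6 := JK hkj hjk hjγ hklast t (by omega) u (by omega) h'
          have hkt := hkj t (by omega) (by omega)
          have h7 : k (u + 1) ≤ k t := by
            rcases Nat.lt_or_ge (u + 1) t with h8 | h8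
            · have h9 := JK hkj hjk hjγ hklast t (by omega) (u + 1) (by omega) h8
              have := hkj (u + 1) (by omega) (by omega)
              omega
            · have : t = u + 1 := by omega
              rw [this]
          omega
    rw [hS, Finset.card_insert_of_notMem huniv_ne, Finset.card_image_of_injOn hinj,
      Finset.card_product, hcA, hcB, Finset.sum_mul_sum]
    omega
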